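/- For every r ≥ 1 and n ≥ 2r: (i) v_n(P) = Σ_j p_j^{2r}(1−p_j)^n ≤ E_P(M_{n,2r})/C(n,2r) ≤ E_P(C_{n,r})/C(n,2r); and (ii) 0 ≤ E_P(θ̂_r^{GT}(X_n)) − E_P(θ_r(P;X_n)) ≤ r·E_P(C_{n,r})/C(n,r+1), where C(n,k) denotes the binomial coefficient. -/

import Mathlib

open MeasureTheory ProbabilityTheory Real Filter

noncomputable section

/-- The law of an i.i.d. sample of size `n` from the discrete distribution `P` on `ℕ`. -/
def sampleMeasure (P : PMF ℕ) (n : ℕ) : Measure (Fin n → ℕ) :=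
  Measure.pi fun _ => P.toMeasure

/-- The probability mass of symbol `j` under `P`, as a real number. -/
def pReal (P : PMF ℕ) (j : ℕ) : ℝ := (P j).toReal

/-- Empirical frequency of the symbol `j` in the sample `ω`. -/
def freq {n : ℕ} (ω : Fin n → ℕ) (j : ℕ) : ℕ :=
  (Finset.univ.filter fun i => ω i = j).card

/-- The `r`-order missing mass `θ_r(P; X_n)`. -/
def missingMass (p : ℕ → ℝ) (r : ℕ) {n : ℕ} (ω : Fin n → ℕ) : ℝ :=
  ∑' j, p j ^ r * (if freq ω j = 0 then 1 else 0)

/-- `M_{n,r}`: the number of distinct symbols appearing exactly `r` times in the sample. -/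
def Mcount {n : ℕ} (ω : Fin n → ℕ) (r : ℕ) : ℝ :=
  ∑' j, if freq ω j = r then 1 else 0

/-- `C_{n,r}`: the number of distinct symbols appearing at least `r` times in the sample. -/
def Ccount {n : ℕ} (ω : Fin n → ℕ) (r : ℕ) : ℝ :=
  ∑' j, if r ≤ freq ω j then 1 else 0

/-- The Good–Turing-type estimator `θ̂_r^{GT}(X_n) = M_{n,r} / (n choose r)`. -/
def gtEst {n : ℕ} (ω : Fin n → ℕ) (r : ℕ) : ℝ := Mcount ω r / (n.choose r)

/-- `v_n(P) = Σ_j p_j^{2r} (1 - p_j)^n`. -/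
def vnP (P : PMF ℕ) (r n : ℕ) : ℝ :=
  ∑' j, pReal P j ^ (2 * r) * (1 - pReal P j) ^ n

/-! ### Auxiliary lemmas -/

instance (n : ℕ) : MeasurableSingletonClass (Fin n → ℕ) :=
  ⟨fun ω => by
    have h : {ω} = ⋂ i, (fun x : Fin n → ℕ => x i) ⁻¹' {ω i} := by
      ext x; simp [funext_iff]
    rw [h]
    exact MeasurableSet.iInter fun i => (measurable_pi_apply i) (measurableSet_singleton _)⟩

lemma meas_event {n : ℕ} (S : Set (Fin n → ℕ)) : MeasurableSet S :=
  S.to_countable.measurableSet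

instance (P : PMF ℕ) (n : ℕ) : IsProbabilityMeasure (sampleMeasure P n) := by
  unfold sampleMeasure; infer_instance

lemma mem_pi_iff {n : ℕ} {j : ℕ} {s : Finset (Fin n)} {ω : Fin n → ℕ} :
    ω ∈ (Set.univ.pi fun i => if i ∈ s then ({j} : Set ℕ) else {j}ᶜ) ↔
      (Finset.univ.filter fun i => ω i = j) = s := by
  simp only [Set.mem_pi, Set.mem_univ, forall_true_left]
  constructor
  · intro h; ext i
    simp only [Finset.mem_filter, Finset.mem_univ, true_and]
    constructor
    · intro hij; by_contra hs
      have := h i; rw [if_neg hs] at this; exact this hij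
    · intro hs; have := h i; rwa [if_pos hs] at this
  · intro h i
    by_cases hs : i ∈ s
    · rw [if_pos hs]
      have : i ∈ Finset.univ.filter fun i => ω i = j := h ▸ hs
      simpa using this
    · rw [if_neg hs]
      intro hij
      exact hs (h ▸ (by simpa using hij : i ∈ Finset.univ.filter fun i => ω i = j))

lemma meas_pi_set (P : PMF ℕ) {n : ℕ} (j : ℕ) (s : Finset (Fin n)) :
    sampleMeasure P n (Set.univ.pi fun i => if i ∈ s then ({j} : Set ℕ) else {j}ᶜ)
      = (P j) ^ s.card * (1 - P j) ^ (n - s.card) := by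
  rw [sampleMeasure, Measure.pi_pi]
  have h1 : P.toMeasure {j} = P j := by
    rw [PMF.toMeasure_apply_singleton _ _ (measurableSet_singleton j)]
  have h2 : P.toMeasure {j}ᶜ = 1 - P j := by
    rw [measure_compl (measurableSet_singleton j) (measure_ne_top _ _), h1]
    simp [PMF.toMeasure_apply_eq_one_iff]
  calc (∏ i : Fin n, P.toMeasure (if i ∈ s then ({j} : Set ℕ) else {j}ᶜ))
      = ∏ i : Fin n, (if i ∈ s then P j else 1 - P j) := by
        refine Finset.prod_congr rfl fun i _ => ?_
        split <;> simp [h1, h2]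
    _ = (P j) ^ s.card * (1 - P j) ^ (sᶜ.card) := by
        rw [Finset.prod_ite, Finset.prod_const, Finset.prod_const]
        congr 2
        · simp [Finset.filter_mem_eq_inter]
        · rw [Finset.filter_not, Finset.filter_mem_eq_inter, Finset.univ_inter,
            Finset.compl_eq_univ_sdiff]
    _ = _ := by rw [Finset.card_compl, Fintype.card_fin]

lemma freq_eq_set {n : ℕ} (j k : ℕ) :
    {ω : Fin n → ℕ | freq ω j = k} =
      ⋃ s ∈ Finset.univ.powersetCard k,
        Set.univ.pi fun i => if i ∈ s then ({j} : Set ℕ) else {j}ᶜ := by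
  ext ω
  simp only [Set.mem_setOf_eq, Set.mem_iUnion, exists_prop, Finset.mem_powersetCard_univ,
    mem_pi_iff]
  constructor
  · intro h; exact ⟨_, h, rfl⟩
  · rintro ⟨s, hc, rfl⟩; exact hc

lemma meas_freq_eq (P : PMF ℕ) {n : ℕ} (j k : ℕ) :
    sampleMeasure P n {ω | freq ω j = k}
      = (n.choose k) * ((P j) ^ k * (1 - P j) ^ (n - k)) := by
  rw [freq_eq_set]
  rw [measure_biUnion_finset ?hd fun s _ => meas_event _]
  · rw [Finset.sum_congr rfl fun s hs => by
      rw [meas_pi_set, Finset.mem_powersetCard_univ.mp hs]]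
    rw [Finset.sum_const, Finset.card_powersetCard, Finset.card_univ, Fintype.card_fin,
      nsmul_eq_mul]
  case hd =>
    intro s hs t ht hst
    refine Set.disjoint_left.mpr fun ω hωs hωt => hst ?_
    rw [← mem_pi_iff.mp hωs, ← mem_pi_iff.mp hωt]

lemma pReal_nonneg (P : PMF ℕ) (j : ℕ) : 0 ≤ pReal P j := ENNReal.toReal_nonneg

lemma pReal_le_one (P : PMF ℕ) (j : ℕ) : pReal P j ≤ 1 := by
  have := ENNReal.toReal_mono ENNReal.one_ne_top (P.coe_le_one j)
  simpa [pReal] using this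

lemma P_ne_top (P : PMF ℕ) (j : ℕ) : P j ≠ ⊤ :=
  ne_top_of_le_ne_top ENNReal.one_ne_top (P.coe_le_one j)

lemma meas_freq_toReal (P : PMF ℕ) {n : ℕ} (j k : ℕ) :
    (sampleMeasure P n {ω | freq ω j = k}).toReal
      = (n.choose k) * (pReal P j ^ k * (1 - pReal P j) ^ (n - k)) := by
  rw [meas_freq_eq, ENNReal.toReal_mul, ENNReal.toReal_mul, ENNReal.toReal_pow,
    ENNReal.toReal_pow, ENNReal.toReal_natCast,
    ENNReal.toReal_sub_of_le (P.coe_le_one j) ENNReal.one_ne_top, ENNReal.toReal_one]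
  rfl

lemma meas_coord (P : PMF ℕ) {n : ℕ} (i : Fin n) (j : ℕ) :
    sampleMeasure P n {ω | ω i = j} = P j := by
  have h : {ω : Fin n → ℕ | ω i = j}
      = Set.univ.pi fun i' => if i' = i then ({j} : Set ℕ) else Set.univ := by
    ext ω
    simp only [Set.mem_setOf_eq, Set.mem_pi, Set.mem_univ, forall_true_left]
    constructor
    · intro hω i'; split <;> simp_all
    · intro h; have := h i; simpa using this
  rw [h, sampleMeasure, Measure.pi_pi]
  rw [Finset.prod_eq_single i (fun b _ hb => by simp [hb]) (by simp)]
  simp [PMF.toMeasure_apply_singleton _ _ (measurableSet_singleton j)]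

lemma tsum_meas_freq_ge_ne_top (P : PMF ℕ) {n : ℕ} (r : ℕ) (hr : 1 ≤ r) :
    (∑' j, sampleMeasure P n {ω | r ≤ freq ω j}) ≠ ⊤ := by
  have hle : ∀ j, sampleMeasure P n {ω | r ≤ freq ω j} ≤ n * P j := by
    intro j
    calc sampleMeasure P n {ω | r ≤ freq ω j}
        ≤ sampleMeasure P n (⋃ i, {ω | ω i = j}) := by
          refine measure_mono fun ω hω => ?_
          have hpos : 0 < (Finset.univ.filter fun i => ω i = j).card := lt_of_lt_of_le hr hω
          obtain ⟨i, hi⟩ := Finset.card_pos.mp hpos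
          exact Set.mem_iUnion.mpr ⟨i, (Finset.mem_filter.mp hi).2⟩
      _ ≤ ∑ i : Fin n, sampleMeasure P n {ω | ω i = j} := measure_iUnion_fintype_le _ _
      _ = n * P j := by simp [meas_coord]
  refine ne_top_of_le_ne_top ?_ (ENNReal.tsum_le_tsum hle)
  rw [ENNReal.tsum_mul_left, PMF.tsum_coe, mul_one]
  exact ENNReal.natCast_ne_top n

lemma tsum_meas_freq_eq_ne_top (P : PMF ℕ) {n : ℕ} (k : ℕ) (hk : 1 ≤ k) :
    (∑' j, sampleMeasure P n {ω | freq ω j = k}) ≠ ⊤ := by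
  refine ne_top_of_le_ne_top (tsum_meas_freq_ge_ne_top P 1 le_rfl)
    (ENNReal.tsum_le_tsum fun j => measure_mono fun ω h => ?_)
  simp only [Set.mem_setOf_eq] at h ⊢
  omega

lemma integral_ind (P : PMF ℕ) {n : ℕ} (p : (Fin n → ℕ) → Prop) [DecidablePred p] :
    ∫ ω, (if p ω then (1 : ℝ) else 0) ∂ sampleMeasure P n
      = (sampleMeasure P n {ω | p ω}).toReal := by
  have h : (fun ω => if p ω then (1 : ℝ) else 0) = {ω | p ω}.indicator fun _ => (1 : ℝ) := by
    ext ω; by_cases hω : p ω <;> simp [Set.indicator_apply, hω]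
  rw [h, integral_indicator_const (1 : ℝ) (meas_event _), smul_eq_mul, mul_one]
  rfl

lemma lintegral_nnnorm_ind (P : PMF ℕ) {n : ℕ} (p : (Fin n → ℕ) → Prop) [DecidablePred p] :
    ∫⁻ ω, ‖(if p ω then (1 : ℝ) else 0)‖₊ ∂ sampleMeasure P n
      = sampleMeasure P n {ω | p ω} := by
  have h : (fun ω => (‖(if p ω then (1 : ℝ) else 0)‖₊ : ENNReal))
      = {ω | p ω}.indicator fun _ => (1 : ENNReal) := by
    ext ω; by_cases hω : p ω <;> simp [Set.indicator_apply, hω]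
  rw [h]
  exact lintegral_indicator_one (meas_event _)

lemma integral_tsum_ind (P : PMF ℕ) {n : ℕ} (c : ℕ → ℕ → Prop) [∀ j k, Decidable (c j k)]
    (hfin : (∑' j, sampleMeasure P n {ω | c j (freq ω j)}) ≠ ⊤) :
    ∫ ω, (∑' j, if c j (freq ω j) then (1 : ℝ) else 0) ∂ sampleMeasure P n
      = ∑' j, (sampleMeasure P n {ω | c j (freq ω j)}).toReal := by
  rw [integral_tsum (fun j => (measurable_of_countable _).aestronglyMeasurable) ?_]
  · exact tsum_congr fun j => integral_ind P fun ω => c j (freq ω j)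
  · calc (∑' j, ∫⁻ ω, ‖(if c j (freq ω j) then (1 : ℝ) else 0)‖₊ ∂ sampleMeasure P n)
        = ∑' j, sampleMeasure P n {ω | c j (freq ω j)} :=
          tsum_congr fun j => lintegral_nnnorm_ind P fun ω => c j (freq ω j)
      _ ≠ ⊤ := hfin

lemma summable_pReal (P : PMF ℕ) : Summable (pReal P) :=
  ENNReal.summable_toReal (by rw [PMF.tsum_coe]; exact ENNReal.one_ne_top)

lemma summable_pq (P : PMF ℕ) (k m : ℕ) (hk : 1 ≤ k) :
    Summable fun j => pReal P j ^ k * (1 - pReal P j) ^ m := by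
  refine Summable.of_nonneg_of_le (fun j => ?_) (fun j => ?_) (summable_pReal P)
  · have h0 := pReal_nonneg P j
    have h1 : (0:ℝ) ≤ 1 - pReal P j := by linarith [pReal_le_one P j]
    positivity
  · have hp0 := pReal_nonneg P j
    have hp1 := pReal_le_one P j
    calc pReal P j ^ k * (1 - pReal P j) ^ m
        ≤ pReal P j ^ k * 1 := by
          refine mul_le_mul_of_nonneg_left ?_ (by positivity)
          exact pow_le_one₀ (by linarith) (by linarith)
      _ = pReal P j ^ k := mul_one _
      _ ≤ pReal P j ^ 1 := pow_le_pow_of_le_one hp0 hp1 hk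
      _ = pReal P j := pow_one _

lemma integral_missing (P : PMF ℕ) {n : ℕ} (r : ℕ) (hr : 1 ≤ r) :
    ∫ ω, missingMass (pReal P) r ω ∂ sampleMeasure P n
      = ∑' j, pReal P j ^ r * (sampleMeasure P n {ω | freq ω j = 0}).toReal := by
  simp only [missingMass]
  rw [integral_tsum (fun j => ((measurable_of_countable _).const_mul _).aestronglyMeasurable) ?_]
  · refine tsum_congr fun j => ?_
    rw [integral_const_mul, integral_ind P fun ω => freq ω j = 0]
  · have hcomp : ∀ j, (∫⁻ ω, ‖pReal P j ^ r * (if freq ω j = 0 then (1:ℝ) else 0)‖₊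
        ∂ sampleMeasure P n) = (‖pReal P j ^ r‖₊ : ENNReal)
          * sampleMeasure P n {ω | freq ω j = 0} := by
      intro j
      have h : (fun ω : Fin n → ℕ => (‖pReal P j ^ r * (if freq ω j = 0 then (1:ℝ) else 0)‖₊ : ENNReal))
          = fun ω : Fin n → ℕ => (‖pReal P j ^ r‖₊ : ENNReal)
              * (‖(if freq ω j = 0 then (1:ℝ) else 0)‖₊ : ENNReal) := by
        ext ω; rw [nnnorm_mul, ENNReal.coe_mul]
      rw [h, lintegral_const_mul _ (by
        exact measurable_of_countable _), lintegral_nnnorm_ind P fun ω => freq ω j = 0]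
    simp only [enorm_eq_nnnorm]
    rw [tsum_congr hcomp]
    have hle : ∀ j, (‖pReal P j ^ r‖₊ : ENNReal) * sampleMeasure P n {ω | freq ω j = 0}
        ≤ ENNReal.ofReal (pReal P j ^ r) := by
      intro j
      calc (‖pReal P j ^ r‖₊ : ENNReal) * sampleMeasure P n {ω | freq ω j = 0}
          ≤ (‖pReal P j ^ r‖₊ : ENNReal) * 1 :=
            mul_le_mul_right prob_le_one _
        _ = ENNReal.ofReal (pReal P j ^ r) := by
            rw [mul_one, ← Real.enorm_eq_ofReal (pow_nonneg (pReal_nonneg P j) r), enorm_eq_nnnorm]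
    refine ne_top_of_le_ne_top ?_ (ENNReal.tsum_le_tsum hle)
    have heq : ∀ j, ENNReal.ofReal (pReal P j ^ r) = (P j) ^ r := by
      intro j
      rw [ENNReal.ofReal_pow (pReal_nonneg P j), pReal, ENNReal.ofReal_toReal (P_ne_top P j)]
    rw [tsum_congr heq]
    have hle2 : ∀ j, (P j) ^ r ≤ P j := fun j => by
      calc (P j) ^ r ≤ (P j) ^ 1 := pow_le_pow_of_le_one zero_le' (P.coe_le_one j) hr
        _ = P j := pow_one _
    exact ne_top_of_le_ne_top (by rw [PMF.tsum_coe]; exact ENNReal.one_ne_top)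
      (ENNReal.tsum_le_tsum hle2)
/-- Moment comparisons: (i) `v_n(P) ≤ E_P(M_{n,2r})/C(n,2r) ≤ E_P(C_{n,r})/C(n,2r)`;
(ii) `0 ≤ E_P(θ̂_r^{GT}) − E_P(θ_r) ≤ r E_P(C_{n,r})/C(n,r+1)`. -/
theorem moment_comparisons (P : PMF ℕ) (r n : ℕ) (hr : 1 ≤ r) (hn : 2 * r ≤ n) :
    (vnP P r n ≤ (∫ ω, Mcount ω (2 * r) ∂ sampleMeasure P n) / (n.choose (2 * r)) ∧
      (∫ ω, Mcount ω (2 * r) ∂ sampleMeasure P n) / (n.choose (2 * r)) ≤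
        (∫ ω, Ccount ω r ∂ sampleMeasure P n) / (n.choose (2 * r))) ∧
    (0 ≤ (∫ ω, gtEst ω r ∂ sampleMeasure P n) -
        (∫ ω, missingMass (pReal P) r ω ∂ sampleMeasure P n) ∧
      (∫ ω, gtEst ω r ∂ sampleMeasure P n) -
          (∫ ω, missingMass (pReal P) r ω ∂ sampleMeasure P n) ≤
        r * (∫ ω, Ccount ω r ∂ sampleMeasure P n) / (n.choose (r + 1))) := by
  have hrn : r ≤ n := le_trans (by omega) hn
  have hr1n : r + 1 ≤ n := by omega
  set μ := sampleMeasure P n with hμ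
  have hp0 : ∀ j, 0 ≤ pReal P j := pReal_nonneg P
  have hp1 : ∀ j, pReal P j ≤ 1 := pReal_le_one P
  have hq0 : ∀ j, 0 ≤ 1 - pReal P j := fun j => by linarith [hp1 j]
  have hq1 : ∀ j, 1 - pReal P j ≤ 1 := fun j => by linarith [hp0 j]
  -- expected values in terms of measures
  have hM2r : ∫ ω, Mcount ω (2 * r) ∂μ = ∑' j, (μ {ω | freq ω j = 2 * r}).toReal :=
    integral_tsum_ind P (fun _ k => k = 2 * r) (tsum_meas_freq_eq_ne_top P _ (by omega))
  have hMr : ∫ ω, Mcount ω r ∂μ = ∑' j, (μ {ω | freq ω j = r}).toReal :=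
    integral_tsum_ind P (fun _ k => k = r) (tsum_meas_freq_eq_ne_top P _ hr)
  have hCr : ∫ ω, Ccount ω r ∂μ = ∑' j, (μ {ω | r ≤ freq ω j}).toReal :=
    integral_tsum_ind P (fun _ k => r ≤ k) (tsum_meas_freq_ge_ne_top P _ hr)
  have hmiss : ∫ ω, missingMass (pReal P) r ω ∂μ
      = ∑' j, pReal P j ^ r * (1 - pReal P j) ^ n := by
    rw [integral_missing P r hr]
    refine tsum_congr fun j => ?_
    rw [meas_freq_toReal]
    simp
  -- summabilities
  have sum2rn : Summable fun j => pReal P j ^ (2 * r) * (1 - pReal P j) ^ n :=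
    summable_pq P _ _ (by omega)
  have sum2rm : Summable fun j => pReal P j ^ (2 * r) * (1 - pReal P j) ^ (n - 2 * r) :=
    summable_pq P _ _ (by omega)
  have sumrn : Summable fun j => pReal P j ^ r * (1 - pReal P j) ^ n :=
    summable_pq P _ _ hr
  have sumrnr : Summable fun j => pReal P j ^ r * (1 - pReal P j) ^ (n - r) :=
    summable_pq P _ _ hr
  have sumr1 : Summable fun j => pReal P j ^ (r + 1) * (1 - pReal P j) ^ (n - r - 1) :=
    summable_pq P _ _ (by omega)
  have sumC : Summable fun j => (μ {ω | r ≤ freq ω j}).toReal :=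
    ENNReal.summable_toReal (tsum_meas_freq_ge_ne_top P r hr)
  have sumM2r : Summable fun j => (μ {ω | freq ω j = 2 * r}).toReal :=
    ENNReal.summable_toReal (tsum_meas_freq_eq_ne_top P _ (by omega))
  -- positivity of binomial coefficients
  have hc2r : (0 : ℝ) < n.choose (2 * r) := by exact_mod_cast Nat.choose_pos hn
  have hcr : (0 : ℝ) < n.choose r := by exact_mod_cast Nat.choose_pos hrn
  have hcr1 : (0 : ℝ) < n.choose (r + 1) := by exact_mod_cast Nat.choose_pos hr1n
  -- closed forms
  have hfM2r : ∫ ω, Mcount ω (2 * r) ∂μ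
      = (n.choose (2 * r)) * ∑' j, pReal P j ^ (2 * r) * (1 - pReal P j) ^ (n - 2 * r) := by
    rw [hM2r, ← tsum_mul_left]
    exact tsum_congr fun j => meas_freq_toReal P j (2 * r)
  have hfMr : ∫ ω, Mcount ω r ∂μ
      = (n.choose r) * ∑' j, pReal P j ^ r * (1 - pReal P j) ^ (n - r) := by
    rw [hMr, ← tsum_mul_left]
    exact tsum_congr fun j => meas_freq_toReal P j r
  have hEGT : ∫ ω, gtEst ω r ∂μ = ∑' j, pReal P j ^ r * (1 - pReal P j) ^ (n - r) := by
    have h : (fun ω : Fin n → ℕ => gtEst ω r) = fun ω => Mcount ω r / (n.choose r) := rfl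
    rw [h, integral_div, hfMr, mul_comm, mul_div_assoc, div_self (ne_of_gt hcr), mul_one]
  refine ⟨⟨?_, ?_⟩, ?_, ?_⟩
  · -- (i).1
    rw [hfM2r, mul_comm, mul_div_assoc, div_self (ne_of_gt hc2r), mul_one, vnP]
    refine Summable.tsum_le_tsum (fun j => ?_) sum2rn sum2rm
    exact mul_le_mul_of_nonneg_left
      (pow_le_pow_of_le_one (hq0 j) (hq1 j) (Nat.sub_le n _)) (pow_nonneg (hp0 j) _)
  · -- (i).2
    have h12 : ∫ ω, Mcount ω (2 * r) ∂μ ≤ ∫ ω, Ccount ω r ∂μ := by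
      rw [hM2r, hCr]
      refine Summable.tsum_le_tsum (fun j => ?_) sumM2r sumC
      refine ENNReal.toReal_mono (measure_ne_top _ _) (measure_mono fun ω h => ?_)
      simp only [Set.mem_setOf_eq] at h ⊢
      omega
    gcongr
  · -- (ii).1
    rw [hEGT, hmiss, sub_nonneg]
    refine Summable.tsum_le_tsum (fun j => ?_) sumrn sumrnr
    exact mul_le_mul_of_nonneg_left
      (pow_le_pow_of_le_one (hq0 j) (hq1 j) (Nat.sub_le n _)) (pow_nonneg (hp0 j) _)
  · -- (ii).2
    have key : ∀ j, pReal P j ^ r * (1 - pReal P j) ^ (n - r)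
        - pReal P j ^ r * (1 - pReal P j) ^ n
        ≤ r * (pReal P j ^ (r + 1) * (1 - pReal P j) ^ (n - r - 1)) := by
      intro j
      have hpj := hp0 j; have hpj1 := hp1 j; have hqj := hq0 j; have hqj1 := hq1 j
      set p := pReal P j with hp
      set q := 1 - p with hq
      have e1 : q ^ n = q ^ (n - r) * q ^ r := by rw [← pow_add]; congr 1; omega
      have bern : 1 - r * p ≤ q ^ r := by
        have h := one_add_mul_le_pow (a := -p) (by linarith : (-2 : ℝ) ≤ -p) r
        calc (1 : ℝ) - r * p = 1 + r * -p := by ring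
          _ ≤ (1 + -p) ^ r := h
          _ = q ^ r := by rw [hq]; ring_nf
      have e3 : q ^ (n - r) ≤ q ^ (n - r - 1) :=
        pow_le_pow_of_le_one hqj hqj1 (by omega)
      have hqpow : (0 : ℝ) ≤ q ^ (n - r) := pow_nonneg hqj _
      have hppow : (0 : ℝ) ≤ p ^ r := pow_nonneg hpj _
      have hppow1 : (0 : ℝ) ≤ p ^ (r + 1) := pow_nonneg hpj _
      calc p ^ r * q ^ (n - r) - p ^ r * q ^ n
          = p ^ r * q ^ (n - r) * (1 - q ^ r) := by rw [e1]; ring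
        _ ≤ p ^ r * q ^ (n - r) * (r * p) := by
            refine mul_le_mul_of_nonneg_left (by linarith) ?_
            exact mul_nonneg hppow hqpow
        _ = r * (p ^ (r + 1) * q ^ (n - r)) := by rw [pow_succ]; ring
        _ ≤ r * (p ^ (r + 1) * q ^ (n - r - 1)) := by
            refine mul_le_mul_of_nonneg_left
              (mul_le_mul_of_nonneg_left e3 hppow1) (by positivity)
    have h3 : (∑' j, pReal P j ^ (r + 1) * (1 - pReal P j) ^ (n - r - 1))
        ≤ (∫ ω, Ccount ω r ∂μ) / (n.choose (r + 1)) := by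
      rw [le_div_iff₀ hcr1, hCr, ← tsum_mul_right]
      refine Summable.tsum_le_tsum (fun j => ?_) (sumr1.mul_right _) sumC
      have hsub : (μ {ω | freq ω j = r + 1}).toReal ≤ (μ {ω | r ≤ freq ω j}).toReal := by
        refine ENNReal.toReal_mono (measure_ne_top _ _) (measure_mono fun ω h => ?_)
        simp only [Set.mem_setOf_eq] at h ⊢
        omega
      calc pReal P j ^ (r + 1) * (1 - pReal P j) ^ (n - r - 1) * (n.choose (r + 1))
          = (n.choose (r + 1)) * (pReal P j ^ (r + 1) * (1 - pReal P j) ^ (n - (r + 1))) := by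
            rw [Nat.sub_sub]; ring
        _ = (μ {ω | freq ω j = r + 1}).toReal := (meas_freq_toReal P j (r + 1)).symm
        _ ≤ (μ {ω | r ≤ freq ω j}).toReal := hsub
    rw [hEGT, hmiss, ← Summable.tsum_sub sumrnr sumrn]
    calc (∑' j, (pReal P j ^ r * (1 - pReal P j) ^ (n - r)
            - pReal P j ^ r * (1 - pReal P j) ^ n))
        ≤ ∑' j, r * (pReal P j ^ (r + 1) * (1 - pReal P j) ^ (n - r - 1)) :=
          Summable.tsum_le_tsum key (sumrnr.sub sumrn) (sumr1.mul_left _)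
      _ = r * ∑' j, pReal P j ^ (r + 1) * (1 - pReal P j) ^ (n - r - 1) := tsum_mul_left
      _ ≤ r * ((∫ ω, Ccount ω r ∂μ) / (n.choose (r + 1))) :=
          mul_le_mul_of_nonneg_left h3 (Nat.cast_nonneg r)
      _ = r * (∫ ω, Ccount ω r ∂μ) / (n.choose (r + 1)) := (mul_div_assoc _ _ _).symm

end
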